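/- Let H be a Hilbert space over ℝ or ℂ, let A, B be bounded self-adjoint positive-definite operators on H, and let T be a bounded self-adjoint operator on H such that Re⟨Th,h⟩ ≥ 2·√(Re⟨Ah,h⟩·Re⟨Bh,h⟩) for all h ∈ H. Then for every finite family of vectors e₁, …, e_n in H one has Σᵢ Re⟨Teᵢ,eᵢ⟩ ≥ 2·√( (Σᵢ Re⟨Aeᵢ,eᵢ⟩) · (Σᵢ Re⟨Beᵢ,eᵢ⟩) ). -/

import Mathlib

open RCLike

section Helpers

variable {𝕜 : Type*} [RCLike 𝕜] {H : Type*} [NormedAddCommGroup H]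
  [InnerProductSpace 𝕜 H]

/-- The real quadratic form associated to an operator. -/
noncomputable def qf (S : H →L[𝕜] H) (u : H) : ℝ := re (inner 𝕜 (S u) u)

lemma qf_expand (S : H →L[𝕜] H) (v w : H) (lam : ℝ) :
    qf S (v + (lam : 𝕜) • w)
      = qf S v + lam * (re (inner 𝕜 (S v) w) + re (inner 𝕜 (S w) v))
          + lam ^ 2 * qf S w := by
  simp only [qf, map_add, map_smul, inner_add_left, inner_add_right,
    inner_smul_left, inner_smul_right, RCLike.conj_ofReal, map_add,
    RCLike.re_ofReal_mul]
  ring_nf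

lemma qf_zero (S : H →L[𝕜] H) : qf S (0 : H) = 0 := by
  simp [qf]

lemma qf_smul_real (S : H →L[𝕜] H) (w : H) (γ : ℝ) :
    qf S ((γ : 𝕜) • w) = γ ^ 2 * qf S w := by
  have h := qf_expand S 0 w γ
  simpa [qf_zero] using h

end Helpers

/-- roots of a positive-leading quadratic with negative constant term -/
lemma quad_roots {p q r : ℝ} (hp : 0 < p) (hr : r < 0) :
    ∃ x y : ℝ, y < 0 ∧ 0 < x ∧ p * x ^ 2 + q * x + r = 0 ∧ p * y ^ 2 + q * y + r = 0 := by
  have hD : 0 ≤ q ^ 2 - 4 * p * r := by nlinarith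
  set s := Real.sqrt (q ^ 2 - 4 * p * r) with hs
  have hs2 : s ^ 2 = q ^ 2 - 4 * p * r := Real.sq_sqrt hD
  have hs0 : 0 ≤ s := Real.sqrt_nonneg _
  have habs : q < s ∧ -s < q := by constructor <;> nlinarith
  refine ⟨(-q + s) / (2 * p), (-q - s) / (2 * p), ?_, ?_, ?_, ?_⟩
  · apply div_neg_of_neg_of_pos <;> nlinarith [habs.2]
  · apply div_pos <;> nlinarith [habs.1]
  · field_simp
    nlinarith [hs2]
  · field_simp
    nlinarith [hs2]

/-- membership in the root interval makes the quadratic nonpositive -/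
lemma quad_nonpos_of_mem {p r q s : ℝ} (hp : 0 < p) (hd : 0 ≤ r ^ 2 - 4 * p * q)
    (h1 : (r - Real.sqrt (r ^ 2 - 4 * p * q)) / (2 * p) ≤ s)
    (h2 : s ≤ (r + Real.sqrt (r ^ 2 - 4 * p * q)) / (2 * p)) :
    p * s ^ 2 - r * s + q ≤ 0 := by
  set D := Real.sqrt (r ^ 2 - 4 * p * q) with hD
  have hD2 : D ^ 2 = r ^ 2 - 4 * p * q := Real.sq_sqrt hd
  rw [div_le_iff₀ (by linarith)] at h1
  rw [le_div_iff₀ (by linarith)] at h2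
  nlinarith [hD2]

lemma left_of_interval {p r q s : ℝ} (hp : 0 < p) (hd : 0 ≤ r ^ 2 - 4 * p * q)
    (h : s < (r - Real.sqrt (r ^ 2 - 4 * p * q)) / (2 * p)) :
    0 < p * s ^ 2 - r * s + q ∧ 2 * p * s < r := by
  set D := Real.sqrt (r ^ 2 - 4 * p * q) with hD
  have hD2 : D ^ 2 = r ^ 2 - 4 * p * q := Real.sq_sqrt hd
  have hD0 : 0 ≤ D := Real.sqrt_nonneg _
  rw [lt_div_iff₀ (by linarith)] at h
  constructor <;> nlinarith

lemma right_of_interval {p r q s : ℝ} (hp : 0 < p) (hd : 0 ≤ r ^ 2 - 4 * p * q)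
    (h : (r + Real.sqrt (r ^ 2 - 4 * p * q)) / (2 * p) < s) :
    0 < p * s ^ 2 - r * s + q ∧ r < 2 * p * s := by
  set D := Real.sqrt (r ^ 2 - 4 * p * q) with hD
  have hD2 : D ^ 2 = r ^ 2 - 4 * p * q := Real.sq_sqrt hd
  have hD0 : 0 ≤ D := Real.sqrt_nonneg _
  rw [div_lt_iff₀ (by linarith)] at h
  constructor <;> nlinarith

lemma alpha_pos {p r q : ℝ} (hp : 0 < p) (hq : 0 < q) (hr : 0 < r)
    (hd : 0 ≤ r ^ 2 - 4 * p * q) :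
    0 < (r - Real.sqrt (r ^ 2 - 4 * p * q)) / (2 * p) := by
  have hD2 : (Real.sqrt (r ^ 2 - 4 * p * q)) ^ 2 = r ^ 2 - 4 * p * q := Real.sq_sqrt hd
  have hD0 : 0 ≤ Real.sqrt (r ^ 2 - 4 * p * q) := Real.sqrt_nonneg _
  apply div_pos _ (by linarith)
  nlinarith


lemma amgm_s {s X Y : ℝ} (hs : 0 < s) (hX : 0 ≤ X) (hY : 0 ≤ Y) :
    2 * Real.sqrt (X * Y) ≤ s * X + Y / s := by
  have h1 : X * Y = (s * X) * (Y / s) := by field_simp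
  have h2 : Real.sqrt ((s * X) * (Y / s)) ≤ (s * X + Y / s) / 2 := by
    rw [show (s * X + Y / s) / 2 = Real.sqrt (((s * X + Y / s) / 2) ^ 2) from
      (Real.sqrt_sq (by positivity)).symm]
    exact Real.sqrt_le_sqrt (by nlinarith [sq_nonneg (s * X - Y / s)])
  rw [h1]; linarith

lemma main_core {a b t c : ℝ} (ha : 0 < a) (ht : t = 2 * c * a)
    (hd : 0 ≤ t ^ 2 - 4 * a * b) : b - c * t + c ^ 2 * a ≤ 0 := by
  subst ht
  nlinarith [ha, hd, mul_pos ha ha]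

lemma conclude_quad {P0 P1 P2 x y : ℝ} (hP0 : 0 < P0) (hP2 : 0 < P2)
    (hx : 0 < x) (hy : y < 0)
    (h1 : P2 * x ^ 2 + P1 * x + P0 ≤ 0) (h2 : P2 * y ^ 2 + P1 * y + P0 ≤ 0) : False := by
  nlinarith [mul_nonpos_of_nonneg_of_nonpos hx.le h2,
    mul_nonpos_of_nonneg_of_nonpos (neg_nonneg.2 hy.le) h1,
    mul_pos hP2 (mul_pos hx (neg_pos.2 hy)),
    mul_pos (show (0:ℝ) < x - y by linarith) hP0]

section Key

variable {𝕜 : Type*} [RCLike 𝕜] {H : Type*} [NormedAddCommGroup H]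
  [InnerProductSpace 𝕜 H]

lemma qf_nonneg_of_pos (S : H →L[𝕜] H)
    (hpos : ∀ h : H, h ≠ 0 → 0 < re (inner 𝕜 (S h) h)) :
    ∀ u : H, 0 ≤ qf S u := by
  intro u
  by_cases hu : u = 0
  · simp [hu, qf_zero]
  · exact (hpos u hu).le

lemma disc_nonneg (A B T : H →L[𝕜] H)
    (hA0 : ∀ u : H, 0 ≤ qf A u) (hB0 : ∀ u : H, 0 ≤ qf B u)
    (hineq : ∀ h : H,
      2 * Real.sqrt (re (inner 𝕜 (A h) h) * re (inner 𝕜 (B h) h))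
        ≤ re (inner 𝕜 (T h) h)) :
    ∀ u : H, 0 ≤ (qf T u) ^ 2 - 4 * qf A u * qf B u := by
  intro u
  have h : 2 * Real.sqrt (qf A u * qf B u) ≤ qf T u := hineq u
  have hab : 0 ≤ qf A u * qf B u := mul_nonneg (hA0 u) (hB0 u)
  have hsq : Real.sqrt (qf A u * qf B u) ^ 2 = qf A u * qf B u := Real.sq_sqrt hab
  nlinarith [Real.sqrt_nonneg (qf A u * qf B u)]

lemma keyLemma (A B T : H →L[𝕜] H)
    (hApos : ∀ h : H, h ≠ 0 → 0 < re (inner 𝕜 (A h) h))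
    (hB0 : ∀ u : H, 0 ≤ qf B u)
    (hineq : ∀ h : H,
      2 * Real.sqrt (re (inner 𝕜 (A h) h) * re (inner 𝕜 (B h) h))
        ≤ re (inner 𝕜 (T h) h))
    (v w : H) (hv : v ≠ 0) (hw : w ≠ 0) :
    (qf T v - Real.sqrt ((qf T v) ^ 2 - 4 * qf A v * qf B v)) / (2 * qf A v)
      ≤ (qf T w + Real.sqrt ((qf T w) ^ 2 - 4 * qf A w * qf B w)) / (2 * qf A w) := by
  have hA0 : ∀ u : H, 0 ≤ qf A u := qf_nonneg_of_pos A hApos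
  have hdisc : ∀ u : H, 0 ≤ (qf T u) ^ 2 - 4 * qf A u * qf B u :=
    disc_nonneg A B T hA0 hB0 hineq
  by_contra hcon
  push_neg at hcon
  set av := qf A v with hav_def
  set bv := qf B v with hbv_def
  set tv := qf T v with htv_def
  set aw := qf A w with haw_def
  set bw := qf B w with hbw_def
  set tw := qf T w with htw_def
  have hav : (0:ℝ) < av := hApos v hv
  have haw : (0:ℝ) < aw := hApos w hw
  have hdv : 0 ≤ tv ^ 2 - 4 * av * bv := hdisc v
  have hdw : 0 ≤ tw ^ 2 - 4 * aw * bw := hdisc w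
  set c : ℝ := ((tw + Real.sqrt (tw ^ 2 - 4 * aw * bw)) / (2 * aw)
      + (tv - Real.sqrt (tv ^ 2 - 4 * av * bv)) / (2 * av)) / 2 with hc
  have hc1 : (tw + Real.sqrt (tw ^ 2 - 4 * aw * bw)) / (2 * aw) < c := by
    rw [hc]; linarith
  have hc2 : c < (tv - Real.sqrt (tv ^ 2 - 4 * av * bv)) / (2 * av) := by
    rw [hc]; linarith
  obtain ⟨hmv, hlv⟩ := left_of_interval hav hdv hc2
  obtain ⟨hmw, hrw⟩ := right_of_interval haw hdw hc1
  by_cases hdep : ∃ γ : ℝ, v = (γ : 𝕜) • w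
  · obtain ⟨γ, hγ⟩ := hdep
    have hγ0 : γ ≠ 0 := by
      rintro rfl
      simp only [RCLike.ofReal_zero, zero_smul] at hγ
      exact hv hγ
    have hγ2 : (0:ℝ) < γ ^ 2 := by positivity
    have e1 : av = γ ^ 2 * aw := by rw [hav_def, haw_def, hγ, qf_smul_real]
    have e2 : tv = γ ^ 2 * tw := by rw [htv_def, htw_def, hγ, qf_smul_real]
    have hlv' : 2 * (γ ^ 2 * aw) * c < γ ^ 2 * tw := by rw [← e1, ← e2]; exact hlv
    nlinarith [hlv', mul_pos hγ2 (show (0:ℝ) < 2 * aw * c - tw by linarith)]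
  · push_neg at hdep
    have hpath : ∀ lam : ℝ, v + (lam : 𝕜) • w ≠ 0 := by
      intro lam h0
      apply hdep (-lam)
      have hv' : v = -((lam : 𝕜) • w) := eq_neg_of_add_eq_zero_left h0
      rw [hv']
      push_cast
      rw [neg_smul]
    set crA := re (inner 𝕜 (A v) w) + re (inner 𝕜 (A w) v) with hcrA
    set crB := re (inner 𝕜 (B v) w) + re (inner 𝕜 (B w) v) with hcrB
    set crT := re (inner 𝕜 (T v) w) + re (inner 𝕜 (T w) v) with hcrT
    obtain ⟨x, y, hy, hx, hhx, hhy⟩ := quad_roots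
      (p := 2 * c * aw - tw) (q := 2 * c * crA - crT) (r := 2 * c * av - tv)
      (by linarith) (by linarith)
    have main : ∀ z : ℝ,
        (2 * c * aw - tw) * z ^ 2 + (2 * c * crA - crT) * z + (2 * c * av - tv) = 0 →
        (aw * c ^ 2 - tw * c + bw) * z ^ 2 + (crA * c ^ 2 - crT * c + crB) * z
          + (av * c ^ 2 - tv * c + bv) ≤ 0 := by
      intro z hz
      set u : H := v + (z : 𝕜) • w with hu
      have hau : qf A u = av + z * crA + z ^ 2 * aw := qf_expand A v w z
      have hbu : qf B u = bv + z * crB + z ^ 2 * bw := qf_expand B v w z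
      have htu : qf T u = tv + z * crT + z ^ 2 * tw := qf_expand T v w z
      have hau_pos : 0 < qf A u := hApos _ (hpath z)
      have ht2c : qf T u = 2 * c * qf A u := by
        rw [htu, hau]; linear_combination -hz
      have hval : (aw * c ^ 2 - tw * c + bw) * z ^ 2 + (crA * c ^ 2 - crT * c + crB) * z
            + (av * c ^ 2 - tv * c + bv)
          = qf B u - c * qf T u + c ^ 2 * qf A u := by
        rw [hau, hbu, htu]; ring
      rw [hval]
      exact main_core hau_pos ht2c (hdisc u)
    exact conclude_quad hmv hmw hx hy (main x hhx) (main y hhy)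

end Key

theorem three_forms_sums
    {𝕜 : Type*} [RCLike 𝕜] {H : Type*} [NormedAddCommGroup H]
    [InnerProductSpace 𝕜 H] [CompleteSpace H]
    (A B T : H →L[𝕜] H)
    (hA : IsSelfAdjoint A) (hB : IsSelfAdjoint B) (hT : IsSelfAdjoint T)
    (hApos : ∀ h : H, h ≠ 0 → 0 < re (inner 𝕜 (A h) h))
    (hBpos : ∀ h : H, h ≠ 0 → 0 < re (inner 𝕜 (B h) h))
    (hineq : ∀ h : H,
      2 * Real.sqrt (re (inner 𝕜 (A h) h) * re (inner 𝕜 (B h) h))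
        ≤ re (inner 𝕜 (T h) h)) :
    ∀ (n : ℕ) (e : Fin n → H),
      2 * Real.sqrt ((∑ i, re (inner 𝕜 (A (e i)) (e i)))
          * (∑ i, re (inner 𝕜 (B (e i)) (e i))))
        ≤ ∑ i, re (inner 𝕜 (T (e i)) (e i)) := by
  intro n e
  classical
  have hA0 : ∀ u : H, 0 ≤ qf A u := qf_nonneg_of_pos A hApos
  have hB0 : ∀ u : H, 0 ≤ qf B u := qf_nonneg_of_pos B hBpos
  have hdisc : ∀ u : H, 0 ≤ (qf T u) ^ 2 - 4 * qf A u * qf B u :=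
    disc_nonneg A B T hA0 hB0 hineq
  show 2 * Real.sqrt ((∑ i, qf A (e i)) * (∑ i, qf B (e i))) ≤ ∑ i, qf T (e i)
  by_cases hne : ∃ i, e i ≠ 0
  · obtain ⟨j0, hj0⟩ := hne
    set I : Finset (Fin n) := Finset.univ.filter (fun i => e i ≠ 0) with hI
    have hIne : I.Nonempty := ⟨j0, by simp [hI, hj0]⟩
    obtain ⟨i0, hi0I, hmax⟩ := I.exists_max_image
      (fun i => (qf T (e i) - Real.sqrt ((qf T (e i)) ^ 2 - 4 * qf A (e i) * qf B (e i)))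
        / (2 * qf A (e i))) hIne
    have hi0 : e i0 ≠ 0 := by simpa [hI] using hi0I
    set s := (qf T (e i0) - Real.sqrt ((qf T (e i0)) ^ 2 - 4 * qf A (e i0) * qf B (e i0)))
        / (2 * qf A (e i0)) with hs
    have hiq : 2 * Real.sqrt (qf A (e i0) * qf B (e i0)) ≤ qf T (e i0) := hineq (e i0)
    have htpos : 0 < qf T (e i0) := by
      have h1 : 0 < Real.sqrt (qf A (e i0) * qf B (e i0)) :=
        Real.sqrt_pos.2 (mul_pos (hApos _ hi0) (hBpos _ hi0))
      linarith
    have hspos : 0 < s :=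
      alpha_pos (hApos _ hi0) (hBpos _ hi0) htpos (hdisc _)
    have key : ∀ i, s * qf A (e i) + qf B (e i) / s ≤ qf T (e i) := by
      intro i
      by_cases hz : e i = 0
      · simp [hz, qf_zero]
      · have hiI : i ∈ I := by simp [hI, hz]
        have h1 : (qf T (e i) - Real.sqrt ((qf T (e i)) ^ 2 - 4 * qf A (e i) * qf B (e i)))
            / (2 * qf A (e i)) ≤ s := hmax i hiI
        have h2 : s ≤ (qf T (e i) + Real.sqrt ((qf T (e i)) ^ 2 - 4 * qf A (e i) * qf B (e i)))
            / (2 * qf A (e i)) := keyLemma A B T hApos hB0 hineq (e i0) (e i) hi0 hz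
        have hA' : (0:ℝ) < qf A (e i) := hApos _ hz
        have h3 := quad_nonpos_of_mem hA' (hdisc (e i)) h1 h2
        have hq : qf B (e i) / s ≤ qf T (e i) - s * qf A (e i) := by
          rw [div_le_iff₀ hspos]; nlinarith [h3]
        linarith
    have hsum := Finset.sum_le_sum (fun i (_ : i ∈ Finset.univ) => key i)
    rw [Finset.sum_add_distrib, ← Finset.mul_sum, ← Finset.sum_div] at hsum
    have hX : 0 ≤ ∑ i, qf A (e i) := Finset.sum_nonneg fun i _ => hA0 _
    have hY : 0 ≤ ∑ i, qf B (e i) := Finset.sum_nonneg fun i _ => hB0 _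
    calc 2 * Real.sqrt ((∑ i, qf A (e i)) * (∑ i, qf B (e i)))
        ≤ s * (∑ i, qf A (e i)) + (∑ i, qf B (e i)) / s := amgm_s hspos hX hY
      _ ≤ ∑ i, qf T (e i) := hsum
  · push_neg at hne
    simp [hne, qf_zero]
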